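/- Let S be a family of self-maps of a set C, R : C → C a retraction onto Fix S (i.e., R C = Fix S and R x = x for x ∈ Fix S), and T : C → C a map commuting with every member of S. Then Fix T ∩ Fix S = Fix (T ∘ R). -/
import Mathlib

/-- If `R` is a retraction of `C` onto the common fixed point set of a family `S`
and `T` commutes with every member of `S`, then `Fix T ∩ Fix S = Fix (T ∘ R)`. -/
theorem fix_inter_fix_eq_fix_comp
    {C : Type*} (S : Set (C → C)) (R T : C → C)
    (hrange : Set.range R = {x : C | ∀ U ∈ S, U x = x})
    (hretr : ∀ x ∈ {x : C | ∀ U ∈ S, U x = x}, R x = x)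
    (hcomm : ∀ U ∈ S, T ∘ U = U ∘ T) :
    {x : C | T x = x} ∩ {x : C | ∀ U ∈ S, U x = x} = {x : C | T (R x) = x} := by
  ext x
  constructor
  · rintro ⟨hT, hS⟩
    have : R x = x := hretr x hS
    show T (R x) = x; rw [this]; exact hT
  · intro hx
    simp only [Set.mem_setOf_eq] at hx
    have hRx : ∀ U ∈ S, U (R x) = R x := by
      have : R x ∈ Set.range R := ⟨x, rfl⟩
      rw [hrange] at this
      exact this
    have hSx : ∀ U ∈ S, U x = x := by
      intro U hU
      calc U x = U (T (R x)) := by rw [hx]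
        _ = T (U (R x)) := (congrFun (hcomm U hU) (R x)).symm
        _ = T (R x) := by rw [hRx U hU]
        _ = x := hx
    have hRfix : R x = x := hretr x hSx
    refine ⟨?_, hSx⟩
    show T x = x
    calc T x = T (R x) := by rw [hRfix]
      _ = x := hx
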